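/- arXiv:2010.07248 — 2 statements merged into one kernel-verified Lean document; each statement's English description precedes it below -/
import Mathlib

section
/- Limit of the area ratio at a regular point: Let V be a complex Hilbert space and let v be a holomorphic map from an open neighborhood of a point z₀ ∈ ℂ to V, with v'(z₀) ≠ 0, and set p := v(z₀). Then there exists δ₀ > 0 such that for every δ ∈ (0, δ₀], as r → 0⁺, r⁻² ∫_{{z ∈ B(z₀,δ) : ‖v(z) − p‖ < r}} ‖v'(z)‖² dA(z) tends to π. -/
open MeasureTheory Metric Set Filter

set_option maxHeartbeats 1000000 in
/-- Limit of the area ratio at a regular point: if `v` is holomorphic near `z₀`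
with `v'(z₀) ≠ 0` and `p = v(z₀)`, then there is `δ₀ > 0` such that for every
`δ ∈ (0, δ₀]`, the ratio `r⁻² · ∫_{z ∈ B(z₀,δ), ‖v(z) − p‖ < r} ‖v'(z)‖² dA`
tends to `π` as `r → 0⁺`. -/
theorem area_ratio_tendsto_pi_at_regular_point
    {V : Type*} [NormedAddCommGroup V] [InnerProductSpace ℂ V] [CompleteSpace V]
    (W : Set ℂ) (hWopen : IsOpen W) (z₀ : ℂ) (hz₀ : z₀ ∈ W)
    (v : ℂ → V) (hv : DifferentiableOn ℂ v W)
    (hreg : deriv v z₀ ≠ 0) :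
    ∃ δ₀ > 0, ∀ δ, 0 < δ → δ ≤ δ₀ →
      Tendsto
        (fun r : ℝ => (r ^ 2)⁻¹ *
          ∫ z in {z | z ∈ ball z₀ δ ∧ ‖v z - v z₀‖ < r}, ‖deriv v z‖ ^ 2)
        (nhdsWithin 0 (Set.Ioi 0)) (nhds Real.pi) := by
  classical
  set c := deriv v z₀ with hc
  have hC : 0 < ‖c‖ := norm_pos_iff.mpr hreg
  set C := ‖c‖ with hCdef
  have hDerivCont : ContinuousOn (deriv v) W := ((hv.analyticOnNhd hWopen).deriv).continuousOn
  -- key δ-extraction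
  have key : ∀ ε : ℝ, 0 < ε → ∃ ρ > 0, closedBall z₀ ρ ⊆ W ∧
      ∀ z ∈ closedBall z₀ ρ, ‖deriv v z - c‖ ≤ ε := by
    intro ε hε
    have hca : ContinuousAt (deriv v) z₀ := hDerivCont.continuousAt (hWopen.mem_nhds hz₀)
    rcases Metric.continuousAt_iff.1 hca ε hε with ⟨ρ₁, hρ₁, h₁⟩
    rcases Metric.isOpen_iff.1 hWopen z₀ hz₀ with ⟨ρ₂, hρ₂, h₂⟩
    refine ⟨min (ρ₁ / 2) (ρ₂ / 2), by positivity, ?_, ?_⟩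
    · intro z hz
      apply h₂
      have := mem_closedBall.1 hz
      have : dist z z₀ < ρ₂ := lt_of_le_of_lt this (lt_of_le_of_lt (min_le_right _ _) (by linarith))
      exact this
    · intro z hz
      have hzd : dist z z₀ < ρ₁ :=
        lt_of_le_of_lt (mem_closedBall.1 hz) (lt_of_le_of_lt (min_le_left _ _) (by linarith))
      have := h₁ hzd
      rw [dist_eq_norm] at this
      exact this.le
  -- mean value estimate
  have mv : ∀ ρ : ℝ, 0 ≤ ρ → ∀ ε : ℝ, closedBall z₀ ρ ⊆ W →
      (∀ z ∈ closedBall z₀ ρ, ‖deriv v z - c‖ ≤ ε) →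
      ∀ z ∈ closedBall z₀ ρ, ‖v z - v z₀ - (z - z₀) • c‖ ≤ ε * ‖z - z₀‖ := by
    intro ρ hρ0 ε hρ hb z hz
    have keyd : ∀ x ∈ closedBall z₀ ρ, HasFDerivWithinAt (fun w => v w - w • c)
        (ContinuousLinearMap.smulRight (1 : ℂ →L[ℂ] ℂ) (deriv v x - c)) (closedBall z₀ ρ) x := by
      intro x hx
      have hvd : HasDerivAt v (deriv v x) x :=
        ((hv.differentiableAt (hWopen.mem_nhds (hρ hx))).hasDerivAt)
      have h2 : HasDerivAt (fun w : ℂ => w • c) c x := by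
        simpa using (hasDerivAt_id x).smul_const c
      exact (hvd.sub h2).hasFDerivAt.hasFDerivWithinAt
    have := Convex.norm_image_sub_le_of_norm_hasFDerivWithin_le keyd
      (fun x hx => by
        rw [ContinuousLinearMap.norm_smulRight_apply]
        simpa using hb x hx)
      (convex_closedBall z₀ ρ) (mem_closedBall_self hρ0) hz
    rw [sub_smul]
    convert this using 2
    abel
  -- choose δ₀ from key with ε = C/2
  obtain ⟨δ₀, hδ₀pos, hδ₀W, hδ₀b⟩ := key (C / 2) (by positivity)
  refine ⟨δ₀, hδ₀pos, ?_⟩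
  intro δ hδpos hδle
  -- continuity of v on the ball
  have hvcont : ContinuousOn v (ball z₀ δ) :=
    (hv.continuousOn).mono (fun z hz => hδ₀W (mem_closedBall.2 (le_trans (mem_ball.1 hz).le hδle)))
  rw [Metric.tendsto_nhdsWithin_nhds]
  intro ε hε
  have hπ : (0:ℝ) < Real.pi := Real.pi_pos
  -- choose κ
  set κ : ℝ := min (1/2) (ε / (17 * Real.pi)) with hκdef
  have hκpos : 0 < κ := lt_min (by norm_num) (by positivity)
  have hκhalf : κ ≤ 1/2 := min_le_left _ _
  have hκε : κ * (17 * Real.pi) ≤ ε := by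
    have := min_le_right (1/2) (ε / (17 * Real.pi))
    calc κ * (17 * Real.pi) ≤ (ε / (17 * Real.pi)) * (17 * Real.pi) := by
          apply mul_le_mul_of_nonneg_right this (by positivity)
      _ = ε := by field_simp
  obtain ⟨ρ₁, hρ₁pos, hρ₁W, hρ₁b⟩ := key (κ * C) (by positivity)
  set ρ : ℝ := min ρ₁ (min δ δ₀) with hρdef
  have hρpos : 0 < ρ := lt_min hρ₁pos (lt_min hδpos hδ₀pos)
  have hρδ : ρ ≤ δ := le_trans (min_le_right _ _) (min_le_left _ _)
  have hρδ₀ : ρ ≤ δ₀ := le_trans (min_le_right _ _) (min_le_right _ _)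
  have hρW : closedBall z₀ ρ ⊆ W := fun z hz => hρ₁W (closedBall_subset_closedBall (min_le_left _ _) hz)
  have hρb : ∀ z ∈ closedBall z₀ ρ, ‖deriv v z - c‖ ≤ κ * C :=
    fun z hz => hρ₁b z (closedBall_subset_closedBall (min_le_left _ _) hz)
  -- mean value on the two balls
  have mvδ₀ : ∀ z ∈ closedBall z₀ δ₀, ‖v z - v z₀ - (z - z₀) • c‖ ≤ (C/2) * ‖z - z₀‖ :=
    mv δ₀ hδ₀pos.le _ hδ₀W hδ₀b
  have mvρ : ∀ z ∈ closedBall z₀ ρ, ‖v z - v z₀ - (z - z₀) • c‖ ≤ (κ * C) * ‖z - z₀‖ :=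
    mv ρ hρpos.le _ hρW hρb
  -- norm bounds on deriv on closedBall ρ
  have dlow : ∀ z ∈ closedBall z₀ ρ, (1 - κ) * C ≤ ‖deriv v z‖ := by
    intro z hz
    have h1 := hρb z hz
    have h2 : ‖c‖ - ‖deriv v z‖ ≤ ‖deriv v z - c‖ := by
      have := norm_sub_norm_le (deriv v z) c
      have := abs_norm_sub_norm_le (deriv v z) c
      linarith [neg_abs_le (‖deriv v z‖ - ‖c‖), abs_norm_sub_norm_le (deriv v z) c]
    nlinarith
  have dhigh : ∀ z ∈ closedBall z₀ ρ, ‖deriv v z‖ ≤ (1 + κ) * C := by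
    intro z hz
    have h1 := hρb z hz
    have h2 : ‖deriv v z‖ - ‖c‖ ≤ ‖deriv v z - c‖ := norm_sub_norm_le _ _
    nlinarith
  -- the threshold
  refine ⟨ρ * C / 2, by positivity, ?_⟩
  intro r hr hrd
  have hr0 : 0 < r := hr
  rw [Real.dist_eq, abs_sub_lt_iff] at hrd ⊢
  have hrρ : 2 * r / C < ρ := by
    rw [div_lt_iff₀ hC]
    rcases hrd with ⟨hrd1, _⟩
    nlinarith
  set S : Set ℂ := {z | z ∈ ball z₀ δ ∧ ‖v z - v z₀‖ < r} with hSdef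
  have hSopen : IsOpen S := by
    have hS : S = ball z₀ δ ∩ (fun z => ‖v z - v z₀‖) ⁻¹' (Iio r) := by
      ext z; simp [hSdef, Set.mem_setOf_eq]
    rw [hS]
    exact ContinuousOn.isOpen_inter_preimage
      ((hvcont.sub continuousOn_const).norm) isOpen_ball isOpen_Iio
  have hSmeas : MeasurableSet S := hSopen.measurableSet
  have hnorm_smul : ∀ z : ℂ, ‖(z - z₀) • c‖ = ‖z - z₀‖ * C := fun z => norm_smul _ _
  have hrevt : ∀ (u w : V), ‖w‖ - ‖u‖ ≤ ‖u - w‖ := by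
    intro u w
    have := norm_sub_norm_le (u) (w)
    linarith [abs_norm_sub_norm_le u w, neg_abs_le (‖u‖ - ‖w‖)]
  have hSsub : S ⊆ ball z₀ ρ := by
    intro z hz
    obtain ⟨hz1, hz2⟩ := hz
    have hzδ₀ : z ∈ closedBall z₀ δ₀ :=
      mem_closedBall.2 (le_trans (mem_ball.1 hz1).le hδle)
    have h1 := mvδ₀ z hzδ₀
    have h2 : ‖(z - z₀) • c‖ ≤ ‖v z - v z₀‖ + ‖v z - v z₀ - (z - z₀) • c‖ := by
      have := norm_sub_le (v z - v z₀) (v z - v z₀ - (z - z₀) • c)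
      simpa using this
    rw [hnorm_smul] at h2
    rw [mem_ball, dist_eq_norm]
    have h3 : ‖z - z₀‖ < 2 * r / C := by
      rw [lt_div_iff₀ hC]; nlinarith
    exact lt_trans h3 hrρ
  -- radial bounds
  set rin : ℝ := r / ((1 + κ) * C) with hrindef
  set rout : ℝ := r / ((1 - κ) * C) with hroutdef
  have h1κ : (0:ℝ) < 1 - κ := by linarith
  have h1κ' : (0:ℝ) < 1 + κ := by linarith
  have hrinpos : 0 < rin := by positivity
  have hroutpos : 0 < rout := by rw [hroutdef]; positivity
  have hroutρ : rout < ρ := by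
    have : rout ≤ 2 * r / C := by
      rw [hroutdef, div_le_div_iff₀ (by positivity) hC]
      nlinarith [mul_pos hr0 hC]
    linarith
  have hrinρ : rin < ρ := by
    have : rin ≤ rout := by
      rw [hrindef, hroutdef]
      apply div_le_div_of_nonneg_left hr0.le (by positivity)
      nlinarith
    linarith
  have hSout : S ⊆ ball z₀ rout := by
    intro z hz
    have hzρ : z ∈ closedBall z₀ ρ := ball_subset_closedBall (hSsub hz)
    obtain ⟨hz1, hz2⟩ := hz
    have h1 := mvρ z hzρ
    have h2 : ‖(z - z₀) • c‖ ≤ ‖v z - v z₀‖ + ‖v z - v z₀ - (z - z₀) • c‖ := by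
      have := norm_sub_le (v z - v z₀) (v z - v z₀ - (z - z₀) • c)
      simpa using this
    rw [hnorm_smul] at h2
    rw [mem_ball, dist_eq_norm, hroutdef, lt_div_iff₀ (by positivity)]
    nlinarith
  have hinS : ball z₀ rin ⊆ S := by
    intro z hz
    have hzn : ‖z - z₀‖ < rin := by rw [← dist_eq_norm]; exact mem_ball.1 hz
    have hzρ : z ∈ closedBall z₀ ρ :=
      mem_closedBall.2 (le_trans (mem_ball.1 hz).le (le_of_lt hrinρ))
    have h1 := mvρ z hzρ
    have h2 : ‖v z - v z₀‖ ≤ ‖v z - v z₀ - (z - z₀) • c‖ + ‖(z - z₀) • c‖ := by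
      have := norm_add_le (v z - v z₀ - (z - z₀) • c) ((z - z₀) • c)
      rw [sub_add_cancel] at this
      exact this
    rw [hnorm_smul] at h2
    constructor
    · exact mem_ball.2 (lt_of_lt_of_le (mem_ball.1 hz) (le_of_lt (lt_of_lt_of_le hrinρ hρδ)))
    · have : ‖v z - v z₀‖ ≤ (1 + κ) * C * ‖z - z₀‖ := by nlinarith
      have h3 : (1 + κ) * C * ‖z - z₀‖ < (1 + κ) * C * rin := by
        apply mul_lt_mul_of_pos_left hzn (by positivity)
      have h4 : (1 + κ) * C * rin = r := by
        rw [hrindef]; field_simp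
      linarith
  -- integrability
  have hf : ContinuousOn (fun z => ‖deriv v z‖ ^ 2) (closedBall z₀ ρ) :=
    ((hDerivCont.mono hρW).norm).pow 2
  have hIcb : IntegrableOn (fun z => ‖deriv v z‖ ^ 2) (closedBall z₀ ρ) volume :=
    hf.integrableOn_compact (isCompact_closedBall z₀ ρ)
  have hIS : IntegrableOn (fun z => ‖deriv v z‖ ^ 2) S volume :=
    hIcb.mono_set (subset_trans hSsub ball_subset_closedBall)
  have hIin : IntegrableOn (fun z => ‖deriv v z‖ ^ 2) (ball z₀ rin) volume :=
    hIcb.mono_set (subset_trans (ball_subset_ball hrinρ.le) ball_subset_closedBall)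
  have hIout : IntegrableOn (fun z => ‖deriv v z‖ ^ 2) (ball z₀ rout) volume :=
    hIcb.mono_set (subset_trans (ball_subset_ball hroutρ.le) ball_subset_closedBall)
  -- volume computations
  have hvol : ∀ t : ℝ, 0 ≤ t → (volume (ball z₀ t)).toReal = t ^ 2 * Real.pi := by
    intro t ht
    rw [Complex.volume_ball]
    rw [ENNReal.toReal_mul, ENNReal.toReal_pow, ENNReal.toReal_ofReal ht]
    simp [NNReal.coe_real_pi]
  -- integral bounds
  have hlow : ((1 - κ) * C) ^ 2 * (rin ^ 2 * Real.pi) ≤ ∫ z in S, ‖deriv v z‖ ^ 2 := by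
    have step1 : ((1 - κ) * C) ^ 2 * (rin ^ 2 * Real.pi)
        ≤ ∫ z in ball z₀ rin, ‖deriv v z‖ ^ 2 := by
      have hconst : ∫ _z in ball z₀ rin, ((1 - κ) * C) ^ 2
          = (rin ^ 2 * Real.pi) * ((1 - κ) * C) ^ 2 := by
        rw [setIntegral_const, measureReal_def, hvol rin hrinpos.le, smul_eq_mul]
      calc ((1 - κ) * C) ^ 2 * (rin ^ 2 * Real.pi)
          = ∫ _z in ball z₀ rin, ((1 - κ) * C) ^ 2 := by rw [hconst]; ring
        _ ≤ ∫ z in ball z₀ rin, ‖deriv v z‖ ^ 2 := by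
            apply setIntegral_mono_on (integrableOn_const measure_ball_lt_top.ne)
              hIin measurableSet_ball
            intro z hz
            have hzρ : z ∈ closedBall z₀ ρ :=
              mem_closedBall.2 (le_trans (mem_ball.1 hz).le hrinρ.le)
            have := dlow z hzρ
            have h0 : (0:ℝ) ≤ (1 - κ) * C := by positivity
            nlinarith [norm_nonneg (deriv v z)]
    have step2 : ∫ z in ball z₀ rin, ‖deriv v z‖ ^ 2 ≤ ∫ z in S, ‖deriv v z‖ ^ 2 := by
      apply setIntegral_mono_set hIS
      · filter_upwards with z using by positivity
      · exact HasSubset.Subset.eventuallyLE hinS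
    linarith
  have hhigh : (∫ z in S, ‖deriv v z‖ ^ 2) ≤ ((1 + κ) * C) ^ 2 * (rout ^ 2 * Real.pi) := by
    have step2 : ∫ z in S, ‖deriv v z‖ ^ 2 ≤ ∫ z in ball z₀ rout, ‖deriv v z‖ ^ 2 := by
      apply setIntegral_mono_set hIout
      · filter_upwards with z using by positivity
      · exact HasSubset.Subset.eventuallyLE hSout
    have step1 : ∫ z in ball z₀ rout, ‖deriv v z‖ ^ 2
        ≤ ((1 + κ) * C) ^ 2 * (rout ^ 2 * Real.pi) := by
      have hconst : ∫ _z in ball z₀ rout, ((1 + κ) * C) ^ 2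
          = (rout ^ 2 * Real.pi) * ((1 + κ) * C) ^ 2 := by
        rw [setIntegral_const, measureReal_def, hvol rout hroutpos.le, smul_eq_mul]
      calc ∫ z in ball z₀ rout, ‖deriv v z‖ ^ 2
          ≤ ∫ _z in ball z₀ rout, ((1 + κ) * C) ^ 2 := by
            apply setIntegral_mono_on hIout
              (integrableOn_const measure_ball_lt_top.ne) measurableSet_ball
            intro z hz
            have hzρ : z ∈ closedBall z₀ ρ :=
              mem_closedBall.2 (le_trans (mem_ball.1 hz).le hroutρ.le)
            have := dhigh z hzρ
            nlinarith [norm_nonneg (deriv v z)]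
        _ = ((1 + κ) * C) ^ 2 * (rout ^ 2 * Real.pi) := by rw [hconst]; ring
    linarith
  -- translate to ratio bounds
  have hr2 : (0:ℝ) < r ^ 2 := by positivity
  have hFlow : Real.pi * ((1 - κ) ^ 2 / (1 + κ) ^ 2)
      ≤ (r ^ 2)⁻¹ * ∫ z in S, ‖deriv v z‖ ^ 2 := by
    have heq : (r ^ 2)⁻¹ * (((1 - κ) * C) ^ 2 * (rin ^ 2 * Real.pi))
        = Real.pi * ((1 - κ) ^ 2 / (1 + κ) ^ 2) := by
      rw [hrindef]
      field_simp
    rw [← heq]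
    apply mul_le_mul_of_nonneg_left hlow (by positivity)
  have hFhigh : (r ^ 2)⁻¹ * (∫ z in S, ‖deriv v z‖ ^ 2)
      ≤ Real.pi * ((1 + κ) ^ 2 / (1 - κ) ^ 2) := by
    have heq : (r ^ 2)⁻¹ * (((1 + κ) * C) ^ 2 * (rout ^ 2 * Real.pi))
        = Real.pi * ((1 + κ) ^ 2 / (1 - κ) ^ 2) := by
      rw [hroutdef]
      field_simp
    rw [← heq]
    apply mul_le_mul_of_nonneg_left hhigh (by positivity)
  -- final arithmetic
  constructor
  · have hub : Real.pi * ((1 + κ) ^ 2 / (1 - κ) ^ 2) < Real.pi + ε := by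
      rw [← mul_div_assoc, div_lt_iff₀ (by positivity : (0:ℝ) < (1 - κ) ^ 2)]
      have ha : (1/4:ℝ) ≤ (1 - κ) ^ 2 := by nlinarith
      have hb : κ * (17 * Real.pi) * (1/4) ≤ ε * (1 - κ) ^ 2 :=
        mul_le_mul hκε ha (by norm_num) hε.le
      nlinarith [mul_pos hκpos hπ]
    linarith
  · have hlb : Real.pi - ε < Real.pi * ((1 - κ) ^ 2 / (1 + κ) ^ 2) := by
      rw [← mul_div_assoc, lt_div_iff₀ (by positivity : (0:ℝ) < (1 + κ) ^ 2)]
      have ha : ε ≤ ε * (1 + κ) ^ 2 := by nlinarith [mul_pos hε hκpos, mul_nonneg hε.le (sq_nonneg κ)]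
      nlinarith [mul_pos hκpos hπ]
    linarith
end

section
/- Weak harmonicity of Hilbert-space-valued holomorphic maps: Let V be a complex Hilbert space, U ⊆ ℂ an open set, v : U → V holomorphic, and w : ℂ → V a continuously ℝ-differentiable map whose support is compact and contained in U. Denote by ∂_s w(z) and ∂_t w(z) the real partial derivatives of w at z in the directions 1 and i respectively; for holomorphic v one has ∂_s v = v' and ∂_t v = i·v'. Then ∫_U ( Re⟪∂_s w(z), v'(z)⟫ + Re⟪∂_t w(z), i·v'(z)⟫ ) dA(z) = 0. -/
open MeasureTheory Set

/-- For a `C¹` compactly supported real-valued function on `ℂ`, the integral of any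
directional derivative vanishes. -/
lemma integral_fderiv_apply_eq_zero {f : ℂ → ℝ} (hf : ContDiff ℝ 1 f)
    (hc : HasCompactSupport f) (y : ℂ) : ∫ z, fderiv ℝ f z y = 0 := by
  have h := integral_mul_fderiv_eq_neg_fderiv_mul_of_integrable
    (μ := (volume : Measure ℂ)) (f := fun _ : ℂ => (1 : ℝ)) (g := f) (v := y)
    ?_ ?_ ?_ (fun x _ => differentiableAt_const (1:ℝ)) (fun x _ => hf.differentiable one_ne_zero x)
  · simpa using h
  · simp
  · have hcont : Continuous fun z => fderiv ℝ f z y :=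
      ((hf.continuous_fderiv one_ne_zero).clm_apply continuous_const)
    simpa using hcont.integrable_of_hasCompactSupport (hc.fderiv_apply ℝ y)
  · simpa using (hf.continuous).integrable_of_hasCompactSupport hc

/-- Weak harmonicity of Hilbert-space-valued holomorphic maps: if `v : U → V` is
holomorphic on the open set `U ⊆ ℂ` and `w : ℂ → V` is `C¹` with compact support
contained in `U`, then `∫_U ( Re⟪∂ₛw, v'⟫ + Re⟪∂ₜw, i·v'⟫ ) dA = 0`, where
`∂ₛw(z)` and `∂ₜw(z)` are the real partial derivatives of `w` at `z` in the
directions `1` and `i`. -/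
theorem weak_harmonicity_of_holomorphic
    {V : Type*} [NormedAddCommGroup V] [InnerProductSpace ℂ V] [CompleteSpace V]
    (U : Set ℂ) (hUopen : IsOpen U)
    (v : ℂ → V) (hv : DifferentiableOn ℂ v U)
    (w : ℂ → V) (hw : ContDiff ℝ 1 w) (hwc : HasCompactSupport w)
    (hws : tsupport w ⊆ U) :
    ∫ z in U,
        ((inner ℂ (fderiv ℝ w z 1) (deriv v z) : ℂ).re
          + (inner ℂ (fderiv ℝ w z Complex.I) (Complex.I • deriv v z) : ℂ).re)
      = 0 := by
  classical
  set g : ℂ → V := deriv v with hg_def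
  have hva : AnalyticOnNhd ℂ v U := hv.analyticOnNhd hUopen
  have hga : AnalyticOnNhd ℂ g U := hva.deriv
  -- smoothness of `g` on `U` over ℝ
  have hgC : ∀ z ∈ U, ContDiffAt ℝ 1 g z := fun z hz =>
    ((hga z hz).contDiffAt).restrict_scalars ℝ
  -- the two scalar test functions
  set f₁ : ℂ → ℝ := fun z => (inner ℂ (w z) (g z) : ℂ).re with hf₁_def
  set f₂ : ℂ → ℝ := fun z => (inner ℂ (w z) (Complex.I • g z) : ℂ).re with hf₂_def
  -- generic smoothness lemma
  have key : ∀ h : ℂ → V, (∀ z ∈ U, ContDiffAt ℝ 1 h z) →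
      ContDiff ℝ 1 fun z => (inner ℂ (w z) (h z) : ℂ).re := by
    intro h hh
    rw [contDiff_iff_contDiffAt]
    intro z
    by_cases hz : z ∈ tsupport w
    · exact (Complex.reCLM.contDiff.contDiffAt).comp z
        ((hw.contDiffAt).inner ℂ (hh z (hws hz)))
    · have hzero : (fun z => (inner ℂ (w z) (h z) : ℂ).re) =ᶠ[nhds z] fun _ => (0 : ℝ) := by
        have hw0 : w =ᶠ[nhds z] 0 := notMem_tsupport_iff_eventuallyEq.mp hz
        filter_upwards [hw0] with y hy
        simp [hy]
      exact (contDiffAt_const (c := (0 : ℝ))).congr_of_eventuallyEq hzero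
  have hf₁C : ContDiff ℝ 1 f₁ := key g hgC
  have hf₂C : ContDiff ℝ 1 f₂ := key (fun z => Complex.I • g z)
    (fun z hz => (hgC z hz).const_smul Complex.I)
  -- compact supports
  have hsupp : ∀ h : ℂ → V, HasCompactSupport fun z => (inner ℂ (w z) (h z) : ℂ).re := by
    intro h
    apply hwc.mono'
    intro z hz
    have : w z ≠ 0 := by
      intro h0
      apply hz
      simp [h0]
    exact subset_closure this
  have hf₁c : HasCompactSupport f₁ := hsupp g
  have hf₂c : HasCompactSupport f₂ := hsupp fun z => Complex.I • g z
  -- the divergence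
  set D : ℂ → ℝ := fun z => fderiv ℝ f₁ z 1 + fderiv ℝ f₂ z Complex.I with hD_def
  have hDint : ∫ z, D z = 0 := by
    have h1 := integral_fderiv_apply_eq_zero hf₁C hf₁c 1
    have h2 := integral_fderiv_apply_eq_zero hf₂C hf₂c Complex.I
    have hi1 : Integrable (fun z => fderiv ℝ f₁ z 1) (volume : Measure ℂ) :=
      ((hf₁C.continuous_fderiv one_ne_zero).clm_apply continuous_const).integrable_of_hasCompactSupport
        (hf₁c.fderiv_apply ℝ 1)
    have hi2 : Integrable (fun z => fderiv ℝ f₂ z Complex.I) (volume : Measure ℂ) :=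
      ((hf₂C.continuous_fderiv one_ne_zero).clm_apply continuous_const).integrable_of_hasCompactSupport
        (hf₂c.fderiv_apply ℝ Complex.I)
    rw [hD_def]
    rw [integral_add hi1 hi2, h1, h2, add_zero]
  -- pointwise identity on U
  have hpt : ∀ z ∈ U,
      ((inner ℂ (fderiv ℝ w z 1) (deriv v z) : ℂ).re
        + (inner ℂ (fderiv ℝ w z Complex.I) (Complex.I • deriv v z) : ℂ).re) = D z := by
    intro z hz
    have hgd : DifferentiableAt ℂ g z := (hga z hz).differentiableAt
    have hgdR : DifferentiableAt ℝ g z := hgd.restrictScalars ℝ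
    have hgI : DifferentiableAt ℝ (fun z => Complex.I • g z) z := hgdR.const_smul Complex.I
    have hwd : DifferentiableAt ℝ w z := hw.differentiable one_ne_zero z
    -- fderiv of g in a direction
    have hDg : ∀ y : ℂ, fderiv ℝ g z y = y • deriv g z := by
      intro y
      rw [hgd.fderiv_restrictScalars ℝ]
      have : (fderiv ℂ g z) y = (fderiv ℂ g z) (y • (1 : ℂ)) := by rw [smul_eq_mul, mul_one]
      simp only [ContinuousLinearMap.coe_restrictScalars']
      rw [this, (fderiv ℂ g z).map_smul, fderiv_apply_one_eq_deriv]
    -- fderiv of the inner products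
    have hF : ∀ (h : ℂ → V) (hh : DifferentiableAt ℝ h z) (y : ℂ),
        fderiv ℝ (fun z => (inner ℂ (w z) (h z) : ℂ).re) z y
          = ((inner ℂ (w z) (fderiv ℝ h z y) : ℂ) + (inner ℂ (fderiv ℝ w z y) (h z) : ℂ)).re := by
      intro h hh y
      have hInner : DifferentiableAt ℝ (fun z => (inner ℂ (w z) (h z) : ℂ)) z :=
        hwd.inner ℂ hh
      have hcomp : fderiv ℝ (fun z => (inner ℂ (w z) (h z) : ℂ).re) z =
          Complex.reCLM.comp (fderiv ℝ (fun z => (inner ℂ (w z) (h z) : ℂ)) z) :=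
        (Complex.reCLM.hasFDerivAt.comp z hInner.hasFDerivAt).fderiv
      rw [hcomp]
      simp only [ContinuousLinearMap.coe_comp', Function.comp_apply, Complex.reCLM_apply]
      rw [fderiv_inner_apply ℂ hwd hh y]
    have h1 : fderiv ℝ f₁ z 1
        = ((inner ℂ (w z) ((1 : ℂ) • deriv g z) : ℂ) + (inner ℂ (fderiv ℝ w z 1) (g z) : ℂ)).re := by
      rw [hf₁_def, hF g hgdR 1, hDg 1]
    have hDgI : fderiv ℝ (fun z => Complex.I • g z) z Complex.I
        = Complex.I • (Complex.I • deriv g z) := by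
      rw [fderiv_fun_const_smul hgdR Complex.I]
      simp only [ContinuousLinearMap.coe_smul', Pi.smul_apply]
      rw [hDg Complex.I]
    have h2 : fderiv ℝ f₂ z Complex.I
        = ((inner ℂ (w z) (Complex.I • (Complex.I • deriv g z)) : ℂ)
            + (inner ℂ (fderiv ℝ w z Complex.I) (Complex.I • g z) : ℂ)).re := by
      rw [hf₂_def, hF (fun z => Complex.I • g z) hgI Complex.I, hDgI]
    have hcancel : Complex.I • (Complex.I • deriv g z) = -((1 : ℂ) • deriv g z) := by
      rw [smul_smul, Complex.I_mul_I, one_smul, neg_one_smul]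
    rw [hD_def]
    simp only [h1, h2, hcancel, inner_neg_right, Complex.add_re, Complex.neg_re]
    try ring
  -- D vanishes outside U
  have hDzero : ∀ z ∉ U, D z = 0 := by
    intro z hz
    have hzs : z ∉ tsupport w := fun h => hz (hws h)
    have hw0 : w =ᶠ[nhds z] 0 := notMem_tsupport_iff_eventuallyEq.mp hzs
    have e1 : f₁ =ᶠ[nhds z] fun _ => (0 : ℝ) := by
      filter_upwards [hw0] with y hy
      simp [hf₁_def, hy]
    have e2 : f₂ =ᶠ[nhds z] fun _ => (0 : ℝ) := by
      filter_upwards [hw0] with y hy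
      simp [hf₂_def, hy]
    have d1 : fderiv ℝ f₁ z = 0 := by
      rw [e1.fderiv_eq]; exact fderiv_const_apply 0
    have d2 : fderiv ℝ f₂ z = 0 := by
      rw [e2.fderiv_eq]; exact fderiv_const_apply 0
    simp [hD_def, d1, d2]
  calc ∫ z in U,
        ((inner ℂ (fderiv ℝ w z 1) (deriv v z) : ℂ).re
          + (inner ℂ (fderiv ℝ w z Complex.I) (Complex.I • deriv v z) : ℂ).re)
      = ∫ z in U, D z :=
        setIntegral_congr_fun hUopen.measurableSet hpt
    _ = ∫ z, D z := setIntegral_eq_integral_of_forall_compl_eq_zero hDzero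
    _ = 0 := hDint
end
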